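/- Let G be a locally profinite group, K a compact subgroup of G, and K' an open subgroup of K (so K' is a compact subgroup with finite index [K : K']). Then for every open compact subgroup W of G containing K, there exist open compact subgroups V and V' of G such that K ⊆ V ⊆ W, K' ⊆ V' ⊆ V, V' ∩ K = K', and [V : V'] = [K : K']. -/

import Mathlib

open Subgroup Pointwise

/-- Let `G` be a locally profinite group (a topological group which is
locally compact, Hausdorff and totally disconnected), `K` a compact subgroup of `G`, and
`K'` an open subgroup of `K` (so `K'` has finite index in `K`).  Then for every open compact
subgroup `W` of `G` containing `K`, there exist open compact subgroups `V` and `V'` of `G`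
such that `K ⊆ V ⊆ W`, `K' ⊆ V' ⊆ V`, `V' ∩ K = K'` and `[V : V'] = [K : K']`. -/
theorem stmt_0 {G : Type*} [Group G] [TopologicalSpace G] [IsTopologicalGroup G]
    [LocallyCompactSpace G] [T2Space G] [TotallyDisconnectedSpace G]
    (K K' : Subgroup G) (hKcpt : IsCompact (K : Set G)) (hle : K' ≤ K)
    (hK'open : IsOpen ((fun x : K => (x : G)) ⁻¹' (K' : Set G)))
    (W : Subgroup G) (hWopen : IsOpen (W : Set G)) (hWcpt : IsCompact (W : Set G))
    (hKW : K ≤ W) :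
    ∃ V V' : Subgroup G,
      IsOpen (V : Set G) ∧ IsCompact (V : Set G) ∧
      IsOpen (V' : Set G) ∧ IsCompact (V' : Set G) ∧
      K ≤ V ∧ V ≤ W ∧ K' ≤ V' ∧ V' ≤ V ∧ V' ⊓ K = K' ∧
      V'.relIndex V = K'.relIndex K := by
  -- An open set O of G with O ∩ K = K'
  obtain ⟨O, hOopen, hO⟩ := isOpen_induced_iff.mp hK'open
  have hOK : ∀ g : G, g ∈ K → (g ∈ O ↔ g ∈ K') := by
    intro g hg
    constructor
    · intro h
      have : (⟨g, hg⟩ : K) ∈ (Subtype.val ⁻¹' O : Set K) := h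
      rw [hO] at this
      exact this
    · intro h
      have : (⟨g, hg⟩ : K) ∈ ((fun x : K => (x : G)) ⁻¹' (K' : Set G)) := h
      rw [← hO] at this
      exact this
  haveI : CompactSpace W := isCompact_iff_compactSpace.mp hWcpt
  -- a clopen neighbourhood of 1 in W inside the preimage of O
  have h1O : (1 : G) ∈ O := (hOK 1 K.one_mem).mpr K'.one_mem
  have hUopen : IsOpen ((Subtype.val : W → G) ⁻¹' O) :=
    hOopen.preimage continuous_subtype_val
  obtain ⟨C, hCclopen, h1C, hCU⟩ :=
    compact_exists_isClopen_in_isOpen hUopen (show (1 : W) ∈ _ from h1O)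
  obtain ⟨H, hH⟩ :=
    IsTopologicalGroup.exist_openNormalSubgroup_sub_clopen_nhds_of_one hCclopen h1C
  have hHO : ∀ x : W, x ∈ H.toSubgroup → (x : G) ∈ O := fun x hx => hCU (hH hx)
  set Kw : Subgroup W := K.subgroupOf W with hKw
  set K'w : Subgroup W := K'.subgroupOf W with hK'w
  set Hw : Subgroup W := H.toSubgroup with hHw
  set Vw : Subgroup W := Kw ⊔ Hw with hVw
  set V'w : Subgroup W := K'w ⊔ Hw with hV'w
  have hK'K : K'w ≤ Kw := comap_mono hle
  have hHK' : Hw ⊓ Kw ≤ K'w := by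
    rintro x ⟨hx1, hx2⟩
    have hxK : (x : G) ∈ K := hx2
    exact (hOK _ hxK).mp (hHO x hx1)
  -- V'w ⊓ Kw = K'w
  have hinf : V'w ⊓ Kw = K'w := by
    apply le_antisymm
    · rintro x ⟨hx1, hx2⟩
      have : x ∈ ((K'w : Set W) * (Hw : Set W)) := by
        rw [← Subgroup.mul_normal K'w Hw]; exact hx1
      obtain ⟨a, ha, b, hb, rfl⟩ := this
      have hbK : b ∈ Kw := by
        have : a⁻¹ * (a * b) ∈ Kw := Kw.mul_mem (Kw.inv_mem (hK'K ha)) hx2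
        simpa using this
      exact K'w.mul_mem ha (hHK' ⟨hb, hbK⟩)
    · exact le_inf le_sup_left hK'K
  -- topological properties in W
  have hVwopen : IsOpen (Vw : Set W) := Subgroup.isOpen_mono le_sup_right H.isOpen
  have hV'wopen : IsOpen (V'w : Set W) := Subgroup.isOpen_mono le_sup_right H.isOpen
  have hVwcpt : IsCompact (Vw : Set W) := (Vw.isClosed_of_isOpen hVwopen).isCompact
  have hV'wcpt : IsCompact (V'w : Set W) := (V'w.isClosed_of_isOpen hV'wopen).isCompact
  have hemb := hWopen.isOpenEmbedding_subtypeVal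
  refine ⟨Vw.map W.subtype, V'w.map W.subtype, ?_, ?_, ?_, ?_, ?_, ?_, ?_, ?_, ?_, ?_⟩
  · rw [coe_map, coe_subtype]; exact hemb.isOpenMap _ hVwopen
  · rw [coe_map, coe_subtype]; exact hVwcpt.image continuous_subtype_val
  · rw [coe_map, coe_subtype]; exact hemb.isOpenMap _ hV'wopen
  · rw [coe_map, coe_subtype]; exact hV'wcpt.image continuous_subtype_val
  · calc K = K ⊓ W := (inf_of_le_left hKW).symm
      _ = Kw.map W.subtype := (subgroupOf_map_subtype K W).symm
      _ ≤ Vw.map W.subtype := map_mono le_sup_left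
  · exact map_subtype_le Vw
  · calc K' = K' ⊓ W := (inf_of_le_left (hle.trans hKW)).symm
      _ = K'w.map W.subtype := (subgroupOf_map_subtype K' W).symm
      _ ≤ V'w.map W.subtype := map_mono le_sup_left
  · exact map_mono (sup_le_sup_right hK'K Hw)
  · calc V'w.map W.subtype ⊓ K = V'w.map W.subtype ⊓ Kw.map W.subtype := by
          rw [subgroupOf_map_subtype, inf_of_le_left hKW]
      _ = (V'w ⊓ Kw).map W.subtype := (map_inf _ _ _ W.subtype_injective).symm
      _ = K'w.map W.subtype := by rw [hinf]
      _ = K' := by rw [subgroupOf_map_subtype, inf_of_le_left (hle.trans hKW)]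
  · -- the index computation
    have key : V'w.relIndex Vw = K'w.relIndex Kw := by
      set π := QuotientGroup.mk' Hw with hπ
      have hVc : (Kw.map π).comap π = Vw := by
        rw [comap_map_eq, QuotientGroup.ker_mk']
      have hV'c : (K'w.map π).comap π = V'w := by
        rw [comap_map_eq, QuotientGroup.ker_mk']
      have step1 : V'w.relIndex Vw = (K'w.map π).relIndex (Kw.map π) := by
        rw [← hVc, ← hV'c, relIndex_comap,
          map_comap_eq_self_of_surjective (QuotientGroup.mk'_surjective Hw)]
      have step2 : K'w.relIndex Kw = (K'w.map π).relIndex (Kw.map π) := by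
        calc K'w.relIndex Kw = (V'w ⊓ Kw).relIndex Kw := by rw [hinf]
          _ = V'w.relIndex Kw := inf_relIndex_right _ _
          _ = (V'w.subgroupOf Kw).index := rfl
          _ = ((K'w.map π).comap (π.comp Kw.subtype)).index := by
              rw [← hV'c, subgroupOf, comap_comap]
          _ = (K'w.map π).relIndex (π.comp Kw.subtype).range := index_comap _ _
          _ = (K'w.map π).relIndex (Kw.map π) := by
              rw [MonoidHom.range_comp, Kw.range_subtype]
      rw [step1, step2]
    calc (V'w.map W.subtype).relIndex (Vw.map W.subtype)
        = ((V'w.map W.subtype).subgroupOf W).relIndex ((Vw.map W.subtype).subgroupOf W) :=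
          (relIndex_subgroupOf (map_subtype_le Vw)).symm
      _ = V'w.relIndex Vw := by
          rw [subgroupOf, subgroupOf, comap_map_eq_self_of_injective W.subtype_injective,
            comap_map_eq_self_of_injective W.subtype_injective]
      _ = K'w.relIndex Kw := key
      _ = K'.relIndex K := relIndex_subgroupOf hKW
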